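/- Let V be a ℚ_p-vector space with a non-archimedean norm, Δ_V = {v : |v| ≤ 1}, and let (e_λ)_{λ∈L} be a family of elements of Δ_V whose images in Δ_V / p Δ_V form a basis of this 𝔽_p-vector space. Then the family (e_λ) is linearly independent over ℚ_p, and if v = Σ_λ ξ_λ e_λ (finite sum) and |v|₁ := max_λ |ξ_λ|, then (1/p) |v|₁ ≤ |v| ≤ |v|₁. -/

import Mathlib

/-- Bourbaki: let `V` be a `ℚ_p`-vector space with a non-archimedean
norm (`‖c • v‖ = ‖c‖ ‖v‖`, ultrametric), and `(e_λ)` a family in the unit ball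
`Δ_V` whose images in `Δ_V / p Δ_V` form an `𝔽_p`-basis (encoded by: any
`ℤ_p`-combination with a unit coefficient has norm `> 1/p`, and every `v ∈ Δ_V`
is within `1/p` of a finite `ℤ_p`-combination).  Then `(e_λ)` is linearly
independent over `ℚ_p`, and for `v = Σ ξ_λ e_λ` with `|v|₁ = max ‖ξ_λ‖`, one has
`(1/p)|v|₁ ≤ ‖v‖ ≤ |v|₁`. -/
theorem stmt7 {p : ℕ} [Fact p.Prime] {V : Type*} [NormedAddCommGroup V]
    [Module ℚ_[p] V] [IsUltrametricDist V]
    (hsmul : ∀ (c : ℚ_[p]) (v : V), ‖c • v‖ = ‖c‖ * ‖v‖)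
    {L : Type*} (e : L → V) (he : ∀ l, ‖e l‖ ≤ 1)
    (hind : ∀ ξ : L →₀ ℤ_[p], (∃ l ∈ ξ.support, ‖ξ l‖ = 1) →
      (1 : ℝ) / p < ‖ξ.sum fun l c => (c : ℚ_[p]) • e l‖)
    (hspan : ∀ v : V, ‖v‖ ≤ 1 → ∃ ξ : L →₀ ℤ_[p],
      ‖v - ξ.sum fun l c => (c : ℚ_[p]) • e l‖ ≤ 1 / p) :
    LinearIndependent ℚ_[p] e ∧
    ∀ ξ : L →₀ ℚ_[p],
      ((ξ.support.sup fun l => ‖ξ l‖₊ : NNReal) : ℝ) / p ≤ ‖ξ.sum fun l c => c • e l‖ ∧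
      ‖ξ.sum fun l c => c • e l‖ ≤ ((ξ.support.sup fun l => ‖ξ l‖₊ : NNReal) : ℝ) := by
  have hp : (0:ℝ) < p := by exact_mod_cast (Fact.out : p.Prime).pos
  have upper : ∀ ξ : L →₀ ℚ_[p],
      ‖ξ.sum fun l c => c • e l‖ ≤ ((ξ.support.sup fun l => ‖ξ l‖₊ : NNReal) : ℝ) := by
    intro ξ
    have : ‖ξ.sum fun l c => c • e l‖₊ ≤ ξ.support.sup fun l => ‖ξ l‖₊ := by
      refine IsUltrametricDist.nnnorm_sum_le_of_forall_le ?_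
      intro l hl
      have h1 : ‖ξ l • e l‖ ≤ ‖ξ l‖ := by
        rw [hsmul]
        calc ‖ξ l‖ * ‖e l‖ ≤ ‖ξ l‖ * 1 := by
              exact mul_le_mul_of_nonneg_left (he l) (norm_nonneg _)
          _ = ‖ξ l‖ := mul_one _
      calc ‖ξ l • e l‖₊ ≤ ‖ξ l‖₊ := by exact_mod_cast h1
        _ ≤ _ := Finset.le_sup (f := fun l => ‖ξ l‖₊) hl
    exact_mod_cast this
  have lower : ∀ ξ : L →₀ ℚ_[p],
      ((ξ.support.sup fun l => ‖ξ l‖₊ : NNReal) : ℝ) / p ≤ ‖ξ.sum fun l c => c • e l‖ := by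
    intro ξ
    rcases eq_or_ne ξ 0 with rfl | hξ
    · simp [hp.le]
    obtain ⟨l₀, hl₀, hsup⟩ := Finset.exists_mem_eq_sup ξ.support
      (Finsupp.support_nonempty_iff.mpr hξ) (fun l => ‖ξ l‖₊)
    set c := ξ l₀ with hc
    have hc0 : c ≠ 0 := Finsupp.mem_support_iff.mp hl₀
    have hcn : (0:ℝ) < ‖c‖ := norm_pos_iff.mpr hc0
    have hle : ∀ l, ‖ξ l * c⁻¹‖ ≤ 1 := by
      intro l
      rcases eq_or_ne (ξ l) 0 with h | h
      · simp [h]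
      · have hl : l ∈ ξ.support := Finsupp.mem_support_iff.mpr h
        have : ‖ξ l‖₊ ≤ ‖c‖₊ := hsup ▸ Finset.le_sup (f := fun l => ‖ξ l‖₊) hl
        have h2 : ‖ξ l‖ ≤ ‖c‖ := by exact_mod_cast this
        rw [norm_mul, norm_inv]
        rw [← div_eq_mul_inv, div_le_one hcn]
        exact h2
    set f : ℚ_[p] → ℤ_[p] := fun x => if h : ‖x * c⁻¹‖ ≤ 1 then (⟨x * c⁻¹, h⟩ : ℤ_[p]) else 0
      with hf
    have hf0 : f 0 = 0 := by
      simp only [hf, zero_mul, norm_zero, zero_le_one, dif_pos]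
      exact Subtype.ext (by simp)
    set η : L →₀ ℤ_[p] := ξ.mapRange f hf0 with hη
    have hηl : ∀ l, (η l : ℚ_[p]) = ξ l * c⁻¹ := by
      intro l
      simp only [hη, Finsupp.mapRange_apply, hf, dif_pos (hle l)]
      exact congrArg Subtype.val (dif_pos (hle l))
    have hsub : η.support ⊆ ξ.support := Finsupp.support_mapRange
    have hsum : η.sum (fun l z => (z : ℚ_[p]) • e l)
        = ∑ l ∈ ξ.support, ((η l : ℚ_[p]) • e l) :=
      Finsupp.sum_of_support_subset η hsub _ (by intro l _; simp)
    have hkey : ξ.sum (fun l c => c • e l) = c • η.sum (fun l z => (z : ℚ_[p]) • e l) := by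
      rw [hsum, Finset.smul_sum, Finsupp.sum]
      refine Finset.sum_congr rfl fun l _ => ?_
      rw [hηl, smul_smul]
      congr 1
      field_simp
    have hmem : l₀ ∈ η.support := by
      rw [Finsupp.mem_support_iff]
      intro h
      apply hc0
      have := hηl l₀
      rw [h] at this
      have h' : ξ l₀ = 0 := by simpa [hc0] using this.symm
      exact h'
    have hnorm1 : ‖η l₀‖ = 1 := by
      rw [PadicInt.norm_def, hηl, ← hc, norm_mul, norm_inv, mul_inv_cancel₀ (by positivity)]
    have hη1 : (1:ℝ)/p < ‖η.sum fun l z => (z : ℚ_[p]) • e l‖ := hind η ⟨l₀, hmem, hnorm1⟩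
    have hsupc : ((ξ.support.sup fun l => ‖ξ l‖₊ : NNReal) : ℝ) = ‖c‖ := by
      rw [hsup]; simp [hc]
    rw [hsupc, hkey, hsmul]
    calc ‖c‖ / p = ‖c‖ * (1 / p) := by ring
      _ ≤ ‖c‖ * ‖(η.sum fun l z => (z : ℚ_[p]) • e l)‖ :=
          mul_le_mul_of_nonneg_left hη1.le (norm_nonneg c)
  refine ⟨linearIndependent_iff.mpr fun ξ hξ => ?_, fun ξ => ⟨lower ξ, upper ξ⟩⟩
  rw [Finsupp.linearCombination_apply] at hξ
  have := lower ξ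
  rw [hξ, norm_zero] at this
  have h0 : ((ξ.support.sup fun l => ‖ξ l‖₊ : NNReal) : ℝ) ≤ 0 := by
    have := (div_le_iff₀ hp).mp this
    simpa using this
  ext l
  rcases eq_or_ne (ξ l) 0 with h | h
  · simp [h]
  · exfalso
    have hl : l ∈ ξ.support := Finsupp.mem_support_iff.mpr h
    have : ‖ξ l‖₊ ≤ ξ.support.sup fun l => ‖ξ l‖₊ := Finset.le_sup (f := fun l => ‖ξ l‖₊) hl
    have h2 : (0:ℝ) < ‖ξ l‖ := norm_pos_iff.mpr h
    have h3 : (‖ξ l‖₊ : ℝ) ≤ 0 := le_trans (by exact_mod_cast this) h0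
    simp at h3
    exact h (by simpa using h3)
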